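/- Let X ⊆ ℝⁿ be a closed set (not necessarily convex) and T : ℝⁿ → ℝᵐ a linear map with C_∞X ∩ ker(T) = {0}. Then there exists an open neighborhood N of T in L(ℝⁿ, ℝᵐ) (with the operator norm) such that for every S ∈ N one has C_∞X ∩ ker(S) = {0} and S(X) is closed in ℝᵐ. -/
import Mathlib


open Metric Filter Set

/-- γ(x,R,X): sup of radii r ≥ 0 of open balls contained in B_R(x) \ X (sup ∅ = 0). -/
noncomputable def porGamma {E : Type*} [SeminormedAddCommGroup E] (x : E) (R : ℝ) (X : Set E) : ℝ :=
  sSup {r : ℝ | 0 ≤ r ∧ ∃ x' : E, ball x' r ⊆ ball x R \ X}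

/-- Porosity of X at x: liminf_{R→0⁺} γ(x,R,X)/R. -/
noncomputable def porosityAt {E : Type*} [SeminormedAddCommGroup E] (x : E) (X : Set E) : ℝ :=
  liminf (fun R => porGamma x R X / R) (nhdsWithin 0 (Ioi 0))

/-- X is porous if its porosity is positive at each of its points. -/
def IsPorous {E : Type*} [SeminormedAddCommGroup E] (X : Set E) : Prop :=
  ∀ x ∈ X, 0 < porosityAt x X

/-- X is σ-porous if it is a countable union of porous sets. -/
def IsSigmaPorous {E : Type*} [SeminormedAddCommGroup E] (X : Set E) : Prop :=
  ∃ f : ℕ → Set E, (∀ k, IsPorous (f k)) ∧ X = ⋃ k, f k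

/-- Asymptotic cone of X. -/
def asympCone {E : Type*} [SeminormedAddCommGroup E] [NormedSpace ℝ E] (X : Set E) : Set E :=
  {v | ∃ (x : ℕ → E) (t : ℕ → ℝ), (∀ k, x k ∈ X) ∧ (∀ k, 0 < t k) ∧
    Tendsto (fun k => ‖x k‖) atTop atTop ∧ Tendsto (fun k => t k • x k) atTop (nhds v)}

section Aux

variable {E F : Type*} [NormedAddCommGroup E] [NormedSpace ℝ E]
  [NormedAddCommGroup F] [NormedSpace ℝ F]

lemma coercive_of_cone [ProperSpace E] (X : Set E) (T : E →L[ℝ] F)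
    (hT : ∀ v ∈ asympCone X, T v = 0 → v = 0) :
    ∃ c : ℝ, 0 < c ∧ ∃ R : ℝ, 0 < R ∧ ∀ x ∈ X, R ≤ ‖x‖ → c * ‖x‖ ≤ ‖T x‖ := by
  by_contra h
  push_neg at h
  have h' : ∀ k : ℕ, ∃ x, x ∈ X ∧ ((k : ℝ) + 1) ≤ ‖x‖ ∧ ‖T x‖ < (1 / ((k : ℝ) + 1)) * ‖x‖ := by
    intro k
    obtain ⟨x, hx1, hx2, hx3⟩ := h (1 / ((k : ℝ) + 1)) (by positivity) ((k : ℝ) + 1) (by positivity)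
    exact ⟨x, hx1, hx2, hx3⟩
  choose x hxX hxR hxT using h'
  have hnx : ∀ k, 0 < ‖x k‖ := fun k => lt_of_lt_of_le (by positivity) (hxR k)
  set u : ℕ → E := fun k => ‖x k‖⁻¹ • x k with hu_def
  have hu : ∀ k, u k ∈ sphere (0 : E) 1 := by
    intro k
    rw [mem_sphere_zero_iff_norm, norm_smul, norm_inv, norm_norm,
      inv_mul_cancel₀ (hnx k).ne']
  obtain ⟨v, hv, φ, hφ, hconv⟩ := (isCompact_sphere (0 : E) 1).tendsto_subseq hu
  have hvcone : v ∈ asympCone X := by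
    refine ⟨x ∘ φ, fun k => ‖x (φ k)‖⁻¹, fun k => hxX _, fun k => inv_pos.2 (hnx _), ?_, hconv⟩
    refine tendsto_atTop_mono (fun k => ?_) tendsto_natCast_atTop_atTop
    calc (k : ℝ) ≤ (φ k : ℝ) := by exact_mod_cast hφ.le_apply
    _ ≤ (φ k : ℝ) + 1 := by linarith
    _ ≤ ‖x (φ k)‖ := hxR _
  have hTu : Tendsto (fun k => T (u (φ k))) atTop (nhds (T v)) :=
    (T.continuous.tendsto v).comp hconv
  have hTu0 : Tendsto (fun k => T (u (φ k))) atTop (nhds 0) := by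
    refine squeeze_zero_norm (fun k => ?_) tendsto_one_div_add_atTop_nhds_zero_nat
    have h1 : ‖T (u (φ k))‖ = ‖x (φ k)‖⁻¹ * ‖T (x (φ k))‖ := by
      rw [hu_def]; simp [norm_smul, norm_inv, abs_of_pos (hnx (φ k))]
    have h2 : ‖x (φ k)‖⁻¹ * ‖T (x (φ k))‖ ≤ ‖x (φ k)‖⁻¹ * ((1 / ((φ k : ℝ) + 1)) * ‖x (φ k)‖) :=
      mul_le_mul_of_nonneg_left (hxT (φ k)).le (by positivity)
    have h3 : ‖x (φ k)‖⁻¹ * ((1 / ((φ k : ℝ) + 1)) * ‖x (φ k)‖) = 1 / ((φ k : ℝ) + 1) := by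
      rw [one_div, mul_comm (((φ k : ℝ) + 1))⁻¹ ‖x (φ k)‖, ← mul_assoc,
        inv_mul_cancel₀ (hnx (φ k)).ne', one_mul]
    have h4 : 1 / ((φ k : ℝ) + 1) ≤ 1 / ((k : ℝ) + 1) := by
      apply one_div_le_one_div_of_le (by positivity)
      have hk : (k : ℝ) ≤ (φ k : ℝ) := Nat.cast_le.2 hφ.le_apply
      linarith
    linarith [h1, h2, h3]
  have hTv : T v = 0 := tendsto_nhds_unique hTu hTu0
  have := hT v hvcone hTv
  rw [mem_sphere_zero_iff_norm] at hv
  rw [this] at hv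
  simp at hv

end Aux

section Aux2

variable {E F : Type*} [NormedAddCommGroup E] [NormedSpace ℝ E]
  [NormedAddCommGroup F] [NormedSpace ℝ F]

lemma closed_image_of_coercive [ProperSpace E] (X : Set E) (hX : IsClosed X)
    (S : E →L[ℝ] F) (c R : ℝ) (hc : 0 < c)
    (hcoer : ∀ x ∈ X, R ≤ ‖x‖ → c * ‖x‖ ≤ ‖S x‖) :
    IsClosed (S '' X) := by
  apply IsSeqClosed.isClosed
  intro y p hy hp
  choose z hzX hz using hy
  obtain ⟨B, hB⟩ : ∃ B, ∀ k, ‖y k‖ ≤ B := by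
    have : BddAbove (range fun k => ‖y k‖) := hp.norm.bddAbove_range
    obtain ⟨B, hB⟩ := this
    exact ⟨B, fun k => hB (mem_range_self k)⟩
  have hb : ∀ k, ‖z k‖ ≤ max R (B / c) := by
    intro k
    by_cases hk : R ≤ ‖z k‖
    · have h1 : c * ‖z k‖ ≤ ‖S (z k)‖ := hcoer _ (hzX k) hk
      rw [hz k] at h1
      have h2 : c * ‖z k‖ ≤ B := h1.trans (hB k)
      have : ‖z k‖ ≤ B / c := (le_div_iff₀ hc).2 (by linarith [h2])
      exact this.trans (le_max_right _ _)
    · exact (le_of_not_ge hk).trans (le_max_left _ _)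
  have hmem : ∀ k, z k ∈ closedBall (0 : E) (max R (B / c)) := fun k =>
    mem_closedBall_zero_iff.2 (hb k)
  obtain ⟨w, -, φ, hφ, hconv⟩ := (isCompact_closedBall (0 : E) (max R (B / c))).tendsto_subseq hmem
  have hwX : w ∈ X := hX.mem_of_tendsto hconv (Eventually.of_forall fun k => hzX (φ k))
  refine ⟨w, hwX, ?_⟩
  have h1 : Tendsto (fun k => S (z (φ k))) atTop (nhds (S w)) :=
    (S.continuous.tendsto w).comp hconv
  have h2 : Tendsto (fun k => S (z (φ k))) atTop (nhds p) := by
    have : (fun k => S (z (φ k))) = fun k => y (φ k) := funext fun k => hz (φ k)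
    rw [this]
    exact hp.comp hφ.tendsto_atTop
  exact tendsto_nhds_unique h1 h2

lemma cone_ker_of_coercive (X : Set E) (S : E →L[ℝ] F) (c R : ℝ) (hc : 0 < c)
    (hcoer : ∀ x ∈ X, R ≤ ‖x‖ → c * ‖x‖ ≤ ‖S x‖)
    (h0 : (0 : E) ∈ asympCone X) :
    asympCone X ∩ (LinearMap.ker (S : E →ₗ[ℝ] F) : Set E) = {0} := by
  apply Set.eq_singleton_iff_unique_mem.2
  constructor
  · exact ⟨h0, by simp [LinearMap.mem_ker]⟩
  · rintro v ⟨⟨x, t, hxX, ht, hnorm, hlim⟩, hker⟩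
    have hSv : S v = 0 := hker
    have hR : ∀ᶠ k in atTop, R ≤ ‖x k‖ := hnorm.eventually_ge_atTop R
    have hle : ∀ᶠ k in atTop, c * ‖t k • x k‖ ≤ ‖S (t k • x k)‖ := by
      filter_upwards [hR] with k hk
      have h1 : c * ‖x k‖ ≤ ‖S (x k)‖ := hcoer _ (hxX k) hk
      rw [norm_smul, map_smul, norm_smul, Real.norm_eq_abs, abs_of_pos (ht k)]
      calc c * (t k * ‖x k‖) = t k * (c * ‖x k‖) := by ring
      _ ≤ t k * ‖S (x k)‖ := mul_le_mul_of_nonneg_left h1 (ht k).le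
    have hL : Tendsto (fun k => c * ‖t k • x k‖) atTop (nhds (c * ‖v‖)) :=
      (hlim.norm).const_mul c
    have hRt : Tendsto (fun k => ‖S (t k • x k)‖) atTop (nhds ‖S v‖) :=
      ((S.continuous.tendsto v).comp hlim).norm
    have := le_of_tendsto_of_tendsto hL hRt hle
    rw [hSv, norm_zero] at this
    have hv : ‖v‖ ≤ 0 := by
      by_contra hcon
      push_neg at hcon
      nlinarith
    simpa using le_antisymm hv (norm_nonneg v)

end Aux2

/-- If X is closed and C_∞X ∩ ker T = {0}, then there is an open neighborhood N of T in
L(ℝⁿ,ℝᵐ) such that every S ∈ N satisfies C_∞X ∩ ker S = {0} and S(X) is closed. -/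
theorem closedImage_stable {n m : ℕ} (X : Set (EuclideanSpace ℝ (Fin n))) (hX : IsClosed X)
    (T : EuclideanSpace ℝ (Fin n) →L[ℝ] EuclideanSpace ℝ (Fin m))
    (hT : asympCone X ∩ (LinearMap.ker (T : EuclideanSpace ℝ (Fin n) →ₗ[ℝ] EuclideanSpace ℝ (Fin m)) : Set (EuclideanSpace ℝ (Fin n))) = {0}) :
    ∃ N : Set (EuclideanSpace ℝ (Fin n) →L[ℝ] EuclideanSpace ℝ (Fin m)),
      IsOpen N ∧ T ∈ N ∧ ∀ S ∈ N,
        asympCone X ∩ (LinearMap.ker (S : EuclideanSpace ℝ (Fin n) →ₗ[ℝ] EuclideanSpace ℝ (Fin m)) : Set (EuclideanSpace ℝ (Fin n))) = {0} ∧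
        IsClosed (S '' X) := by
  have h0 : (0 : EuclideanSpace ℝ (Fin n)) ∈ asympCone X := by
    have h1 : (0 : EuclideanSpace ℝ (Fin n)) ∈ ({0} : Set (EuclideanSpace ℝ (Fin n))) := rfl
    rw [← hT] at h1
    exact h1.1
  have hT' : ∀ v ∈ asympCone X, T v = 0 → v = 0 := by
    intro v hv hTv
    have : v ∈ asympCone X ∩ (LinearMap.ker (T : EuclideanSpace ℝ (Fin n) →ₗ[ℝ] EuclideanSpace ℝ (Fin m)) : Set (EuclideanSpace ℝ (Fin n))) :=
      ⟨hv, LinearMap.mem_ker.mpr (show ((T : EuclideanSpace ℝ (Fin n) →ₗ[ℝ] EuclideanSpace ℝ (Fin m)) v = 0) from hTv)⟩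
    rw [hT] at this
    exact this
  obtain ⟨c, hc, R, hR, hcoer⟩ := coercive_of_cone X T hT'
  refine ⟨ball T (c / 2), isOpen_ball, mem_ball_self (by positivity), ?_⟩
  intro S hS
  have hcoerS : ∀ x ∈ X, R ≤ ‖x‖ → (c / 2) * ‖x‖ ≤ ‖S x‖ := by
    intro x hx hxR
    have h1 : ‖T x - S x‖ ≤ ‖T - S‖ * ‖x‖ := by
      have := (T - S).le_opNorm x
      simpa using this
    have h2 : ‖T - S‖ < c / 2 := by
      rw [mem_ball, dist_eq_norm] at hS
      rwa [← norm_neg, neg_sub] at hS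
    have h3 : ‖T x - S x‖ ≤ (c / 2) * ‖x‖ :=
      h1.trans (mul_le_mul_of_nonneg_right h2.le (norm_nonneg x))
    have h4 : ‖T x‖ - ‖S x‖ ≤ ‖T x - S x‖ := norm_sub_norm_le _ _
    have h5 : c * ‖x‖ ≤ ‖T x‖ := hcoer x hx hxR
    linarith
  exact ⟨cone_ker_of_coercive X S (c / 2) R (by positivity) hcoerS h0,
    closed_image_of_coercive X hX S (c / 2) R (by positivity) hcoerS⟩
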